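/- In the polynomial ring ℂ[e_1,...,e_n], the ideal ⟨e_n - 1, h_{k+1}, ..., h_{n+k-1}⟩ equals the ideal generated by e_n - 1 together with all Schur polynomials s_{(k+1, λ_2, ..., λ_{n-1}, 0)} with k+1 ≥ λ_2 ≥ ⋯ ≥ λ_{n-1} ≥ 0. -/

import Mathlib

open MvPolynomial

/-- The generator `e_r` of `ℂ[e_1,…,e_n]`, realised as `MvPolynomial (Fin n) ℂ`
(`e_0 = 1`, `e_r = 0` for `r > n`). -/
noncomputable def eGen (n : ℕ) (r : ℕ) : MvPolynomial (Fin n) ℂ :=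
  if h0 : r = 0 then 1 else if h : r ≤ n then X ⟨r - 1, by omega⟩ else 0

/-- `e_m` with integer index, vanishing for `m < 0`. -/
noncomputable def eGenZ (n : ℕ) (m : ℤ) : MvPolynomial (Fin n) ℂ :=
  if 0 ≤ m then eGen n m.toNat else 0

/-- The complete symmetric function `h_r = det(e_{1-i+j})_{1≤i,j≤r}` (Jacobi–Trudi). -/
noncomputable def hGen (n : ℕ) (r : ℕ) : MvPolynomial (Fin n) ℂ :=
  (Matrix.of fun i j : Fin r => eGenZ n (1 + (j : ℤ) - (i : ℤ))).det

/-- `h_m` with integer index, vanishing for `m < 0`. -/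
noncomputable def hGenZ (n : ℕ) (m : ℤ) : MvPolynomial (Fin n) ℂ :=
  if 0 ≤ m then hGen n m.toNat else 0

/-- The Schur polynomial of the partition `λ = (λ_1,…,λ_n)` via the Jacobi–Trudi
determinant `s_λ = det(h_{λ_i - i + j})_{1≤i,j≤n}`. -/
noncomputable def schurJT (n : ℕ) (lam : Fin n → ℕ) : MvPolynomial (Fin n) ℂ :=
  (Matrix.of fun i j : Fin n => hGenZ n ((lam i : ℤ) - (i : ℤ) + (j : ℤ))).det

/-! ### Auxiliary machinery -/

/-- Generic Jacobi–Trudi style matrix: entry `(i,j)` is `h_{g(i) + j}`. -/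
noncomputable def Mg (n : ℕ) (g : ℕ → ℤ) (s : ℕ) :
    Matrix (Fin s) (Fin s) (MvPolynomial (Fin n) ℂ) :=
  Matrix.of fun i j => hGenZ n (g (i : ℕ) + (j : ℕ))

lemma hGenZ_natCast (n a : ℕ) : hGenZ n (a : ℤ) = hGen n a := by
  simp [hGenZ]

lemma hGen_zero (n : ℕ) : hGen n 0 = 1 := by
  simp [hGen, Matrix.det_fin_zero]

lemma hGenZ_neg (n : ℕ) {m : ℤ} (h : m < 0) : hGenZ n m = 0 := by
  simp [hGenZ, not_le.mpr h]

lemma hGenZ_zero (n : ℕ) : hGenZ n 0 = 1 := by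
  have := hGenZ_natCast n 0
  simpa [hGen_zero] using this

lemma Mg_congr (n : ℕ) {g g' : ℕ → ℤ} (s : ℕ) (h : ∀ i, i < s → g i = g' i) :
    Mg n g s = Mg n g' s := by
  ext i j
  simp [Mg, h i i.isLt]

/-- If one row of a square matrix has all entries in an ideal, so does its determinant. -/
lemma det_mem_of_row {R : Type*} [CommRing R] {s : ℕ} (A : Matrix (Fin s) (Fin s) R)
    (I : Ideal R) (i0 : Fin s) (h : ∀ j, A i0 j ∈ I) : A.det ∈ I := by
  rw [Matrix.det_apply]
  refine I.sum_mem fun σ _ => ?_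
  have hp : (∏ i, A (σ i) i) =
      A (σ (σ⁻¹ i0)) (σ⁻¹ i0) * ∏ i ∈ Finset.univ.erase (σ⁻¹ i0), A (σ i) i :=
    (Finset.mul_prod_erase _ _ (Finset.mem_univ _)).symm
  rw [hp, show σ (σ⁻¹ i0) = i0 from (Equiv.eq_symm_apply σ).mp rfl]
  have hm : A i0 (σ⁻¹ i0) * ∏ i ∈ Finset.univ.erase (σ⁻¹ i0), A (σ i) i ∈ I :=
    Ideal.mul_mem_right _ _ (h _)
  rw [Units.smul_def, zsmul_eq_mul]
  exact Ideal.mul_mem_left _ _ hm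

/-- Dropping a trivial last row/column. -/
lemma det_drop (n : ℕ) (g : ℕ → ℤ) (s : ℕ) (hg : g s = -(s : ℤ)) :
    (Mg n g (s + 1)).det = (Mg n g s).det := by
  rw [Matrix.det_succ_row _ (Fin.last s)]
  rw [Finset.sum_eq_single (Fin.last s)]
  · have h1 : (Mg n g (s+1)) (Fin.last s) (Fin.last s) = 1 := by
      simp [Mg, hg, hGenZ_zero]
    have h2 : (Mg n g (s+1)).submatrix (Fin.last s).succAbove (Fin.last s).succAbove
        = Mg n g s := by
      ext i j
      simp [Mg, Fin.succAbove_last]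
    rw [h1, h2, mul_one]
    have : (-1 : MvPolynomial (Fin n) ℂ) ^ ((Fin.last s : ℕ) + (Fin.last s : ℕ)) = 1 := by
      rw [Even.neg_one_pow ⟨s, by simp⟩]
    rw [this, one_mul]
  · intro j _ hj
    have hjs : (j : ℕ) < s := by
      have := j.isLt
      rcases lt_or_eq_of_le (Nat.lt_succ_iff.mp this) with h | h
      · exact h
      · exact absurd (Fin.ext h) hj
    have : (Mg n g (s+1)) (Fin.last s) j = 0 := by
      have : g s + (j : ℕ) < 0 := by omega
      simp [Mg, hGenZ_neg n this]
    rw [this, mul_zero, zero_mul]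
  · intro h
    exact absurd (Finset.mem_univ _) h

lemma det_drop_to (n : ℕ) (g : ℕ → ℤ) (m : ℕ) :
    ∀ s, m ≤ s → (∀ t, m ≤ t → t < s → g t = -(t : ℤ)) →
      (Mg n g s).det = (Mg n g m).det := by
  intro s
  induction s with
  | zero =>
    intro h _
    obtain rfl : m = 0 := Nat.le_zero.mp h
    rfl
  | succ s ih =>
    intro hms hg
    rcases eq_or_lt_of_le hms with h | h
    · rw [h]
    · have h1 : m ≤ s := by omega
      rw [det_drop n g s (hg s h1 (by omega))]
      exact ih h1 (fun t ht1 ht2 => hg t ht1 (by omega))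

noncomputable def gOf (n : ℕ) (lam : Fin n → ℕ) : ℕ → ℤ :=
  fun i => if h : i < n then (lam ⟨i, h⟩ : ℤ) - i else -(i : ℤ)

lemma schurJT_eq (n : ℕ) (lam : Fin n → ℕ) : schurJT n lam = (Mg n (gOf n lam) n).det := by
  unfold schurJT Mg gOf
  congr 1
  ext i j
  simp only [Matrix.of_apply]
  rw [dif_pos i.isLt]

/-- The "hook" offset function for the hook `(a, 1, 1, …)`. -/
def hookG (a : ℕ) : ℕ → ℤ := fun i => if i = 0 then (a : ℤ) else 1 - (i : ℤ)

/-- Expansion of the hook determinant along the first column. -/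
lemma hook_step (n a m : ℕ) : ∃ c, (Mg n (hookG a) (m + 2)).det =
    hGen n a * c - (Mg n (hookG (a + 1)) (m + 1)).det := by
  refine ⟨((Mg n (hookG a) (m+2)).submatrix (0 : Fin (m+2)).succAbove Fin.succ).det, ?_⟩
  rw [Matrix.det_succ_column_zero, Fin.sum_univ_succ, Fin.sum_univ_succ]
  have hz : ∀ i : Fin m, (Mg n (hookG a) (m+2)) i.succ.succ 0 = 0 := by
    intro i
    have hv : ((i.succ.succ : Fin (m+2)) : ℕ) = (i : ℕ) + 2 := by
      simp [Fin.val_succ]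
    simp only [Mg, Matrix.of_apply, hv, Fin.val_zero]
    rw [show hookG a ((i : ℕ) + 2) = 1 - (((i : ℕ) : ℤ) + 2) by
      rw [hookG, if_neg (by omega)]; push_cast; ring]
    apply hGenZ_neg
    omega
  have hsum : (∑ i : Fin m, (-1 : MvPolynomial (Fin n) ℂ) ^ ((i.succ.succ : Fin (m+2)) : ℕ) *
      (Mg n (hookG a) (m+2)) i.succ.succ 0 *
      ((Mg n (hookG a) (m+2)).submatrix (i.succ.succ : Fin (m+2)).succAbove Fin.succ).det) = 0 := by
    refine Finset.sum_eq_zero fun i _ => ?_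
    rw [hz i, mul_zero, zero_mul]
  rw [hsum, add_zero]
  have h00 : (Mg n (hookG a) (m+2)) 0 0 = hGen n a := by
    simp [Mg, hookG, hGenZ_natCast]
  have h10 : (Mg n (hookG a) (m+2)) (Fin.succ 0) 0 = 1 := by
    simp [Mg, hookG, hGenZ_zero, Fin.val_succ]
  have hsub : (Mg n (hookG a) (m+2)).submatrix (Fin.succ (0 : Fin (m+1))).succAbove Fin.succ
      = Mg n (hookG (a+1)) (m+1) := by
    have h1eq : Fin.succ (0 : Fin (m+1)) = (1 : Fin (m+2)) := rfl
    rw [h1eq]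
    ext i j
    rcases Fin.eq_zero_or_eq_succ i with rfl | ⟨i', rfl⟩
    · have : ((1 : Fin (m+2)).succAbove 0 : ℕ) = 0 := by
        simp [Fin.succAbove]
      simp only [Matrix.submatrix_apply, Mg, Matrix.of_apply, this]
      simp only [hookG, if_pos rfl]
      congr 1
      simp [Fin.val_succ]
      ring
    · have h1 : ((1 : Fin (m+2)).succAbove i'.succ : ℕ) = (i' : ℕ) + 2 := by
        simp [Fin.succAbove, Fin.lt_def]
      simp only [Matrix.submatrix_apply, Mg, Matrix.of_apply, h1]
      simp only [hookG, Fin.val_succ]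
      rw [if_neg (by omega), if_neg (by simp)]
      congr 1
      push_cast
      ring
  rw [h00, h10, hsub]
  norm_num [Fin.val_succ]
  ring

/-- The key "draining" lemma: from hook determinants and lower `h`'s in an ideal,
conclude the top `h` is in the ideal. -/
lemma hook_drain (n : ℕ) (I : Ideal (MvPolynomial (Fin n) ℂ)) :
    ∀ m a, (Mg n (hookG a) (m + 1)).det ∈ I → (∀ j, j < m → hGen n (a + j) ∈ I) →
      hGen n (a + m) ∈ I := by
  intro m
  induction m with
  | zero =>
    intro a h1 _
    have : (Mg n (hookG a) 1).det = hGen n a := by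
      rw [Matrix.det_fin_one]
      simp [Mg, hookG, hGenZ_natCast]
    rw [this] at h1
    simpa using h1
  | succ m ih =>
    intro a h1 h2
    obtain ⟨c, hc⟩ := hook_step n a m
    have hd : (Mg n (hookG (a + 1)) (m + 1)).det ∈ I := by
      have he : (Mg n (hookG (a+1)) (m+1)).det
          = hGen n a * c - (Mg n (hookG a) (m+2)).det := by
        rw [hc]; ring
      rw [he]
      have ha : hGen n a ∈ I := by simpa using h2 0 (by omega)
      exact I.sub_mem (I.mul_mem_right c ha) h1
    have := ih (a + 1) hd (fun j hj => by
      have := h2 (j + 1) (by omega)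
      rwa [show a + (j + 1) = a + 1 + j by omega] at this)
    rwa [show a + 1 + m = a + (m + 1) by omega] at this

lemma hook_schur (n k : ℕ) (hn : 2 ≤ n) (mm : ℕ) (h1 : 1 ≤ mm) (h2 : mm ≤ n - 1) :
    ∃ lam : Fin n → ℕ, Antitone lam ∧ lam ⟨0, by omega⟩ = k + 1 ∧
      lam ⟨n - 1, by omega⟩ = 0 ∧ schurJT n lam = (Mg n (hookG (k + 1)) mm).det := by
  refine ⟨fun i => if (i : ℕ) = 0 then k + 1 else if (i : ℕ) < mm then 1 else 0, ?_, ?_, ?_, ?_⟩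
  · intro i j hij
    have hij' : (i : ℕ) ≤ (j : ℕ) := hij
    dsimp only
    split_ifs <;> omega
  · simp
  · have hne : n - 1 ≠ 0 := by omega
    have hlt : ¬ (n - 1 < mm) := by omega
    simp [hne, hlt]
  · rw [schurJT_eq]
    rw [det_drop_to n _ mm n (by omega) ?_]
    · rw [Mg_congr n mm ?_]
      intro i hi
      rcases Nat.eq_zero_or_pos i with rfl | hpos
      · simp [gOf, hookG, show (0:ℕ) < n by omega]
      · have hin : i < n := by omega
        simp only [gOf, dif_pos hin, hookG, Fin.val_mk]
        rw [if_neg (show ¬ i = 0 by omega), if_pos hi, if_neg (show ¬ i = 0 by omega)]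
        push_cast
        ring
    · intro t ht1 ht2
      simp only [gOf, dif_pos ht2]
      rw [if_neg (by omega), if_neg (by omega)]
      push_cast
      ring

/-! ### The main theorem -/

theorem gepner_ideal_eq_goodman_wenzl_ideal (n k : ℕ) (hn : 2 ≤ n) :
    Ideal.span (insert (eGen n n - 1)
        {p | ∃ r : ℕ, k + 1 ≤ r ∧ r ≤ n + k - 1 ∧ p = hGen n r}) =
      Ideal.span (insert (eGen n n - 1)
        {p | ∃ lam : Fin n → ℕ, Antitone lam ∧ lam ⟨0, by omega⟩ = k + 1 ∧
          lam ⟨n - 1, by omega⟩ = 0 ∧ p = schurJT n lam}) := by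
  set S2 : Set (MvPolynomial (Fin n) ℂ) := insert (eGen n n - 1)
      {p | ∃ lam : Fin n → ℕ, Antitone lam ∧ lam ⟨0, by omega⟩ = k + 1 ∧
        lam ⟨n - 1, by omega⟩ = 0 ∧ p = schurJT n lam} with hS2
  set S1 : Set (MvPolynomial (Fin n) ℂ) := insert (eGen n n - 1)
      {p | ∃ r : ℕ, k + 1 ≤ r ∧ r ≤ n + k - 1 ∧ p = hGen n r} with hS1
  -- all h_{k+1+m}, m ≤ n-2, are in span S2
  have key : ∀ m, m ≤ n - 2 → hGen n (k + 1 + m) ∈ Ideal.span S2 := by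
    intro m
    induction m using Nat.strong_induction_on with
    | _ m ihm =>
      intro hm
      refine hook_drain n (Ideal.span S2) m (k + 1) ?_ (fun j hj => ihm j hj (by omega))
      obtain ⟨lam, ha, h0, hl, hs⟩ := hook_schur n k hn (m + 1) (by omega) (by omega)
      rw [← hs]
      exact Ideal.subset_span (Set.mem_insert_iff.mpr (Or.inr ⟨lam, ha, h0, hl, rfl⟩))
  apply le_antisymm
  · rw [Ideal.span_le]
    rintro p hp
    rcases Set.mem_insert_iff.mp hp with rfl | hp'
    · exact Ideal.subset_span (Set.mem_insert _ _)
    · obtain ⟨r, hr1, hr2, rfl⟩ := hp'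
      have : r = k + 1 + (r - k - 1) := by omega
      rw [this]
      exact SetLike.mem_coe.mpr (key (r - k - 1) (by omega))
  · rw [Ideal.span_le]
    rintro p hp
    rcases Set.mem_insert_iff.mp hp with rfl | hp'
    · exact Ideal.subset_span (Set.mem_insert _ _)
    · obtain ⟨lam, ha, h0, hl, rfl⟩ := hp'
      rw [schurJT_eq]
      have hdrop : (Mg n (gOf n lam) n).det = (Mg n (gOf n lam) (n - 1)).det := by
        refine det_drop_to n _ (n - 1) n (by omega) ?_
        intro t ht1 ht2
        obtain rfl : t = n - 1 := by omega
        simp only [gOf, dif_pos ht2]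
        rw [show lam ⟨n - 1, ht2⟩ = 0 from hl]
        simp
      rw [hdrop]
      refine SetLike.mem_coe.mpr (det_mem_of_row _ _ ⟨0, by omega⟩ ?_)
      intro j
      have hval : (Mg n (gOf n lam) (n - 1)) ⟨0, by omega⟩ j = hGen n (k + 1 + (j : ℕ)) := by
        simp only [Mg, Matrix.of_apply, gOf]
        rw [dif_pos (by omega : (0 : ℕ) < n)]
        rw [show lam ⟨0, by omega⟩ = k + 1 from h0]
        rw [show ((k + 1 : ℕ) : ℤ) - ((0:ℕ) : ℤ) + ((j : ℕ) : ℤ) = ((k + 1 + (j:ℕ) : ℕ) : ℤ)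
          by push_cast; ring]
        exact hGenZ_natCast n _
      rw [hval]
      refine Ideal.subset_span (Set.mem_insert_iff.mpr (Or.inr ⟨k + 1 + (j : ℕ), by omega, ?_, rfl⟩))
      have := j.isLt
      omega
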